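/- Let T be a tree, ω a nonnegative weight function, and D a distribution on T that is not ω-solvable. If x and y are adjacent vertices with C_x(y) ≥ 0, then C_y(x) < 0, where C_x (resp. C_y) is the induced generalized distribution on the star consisting of x (resp. y) and all its neighbors, obtained from D − ω by iterated leaf-contraction. -/

import Mathlib

open SimpleGraph Finset

variable {V : Type*} [DecidableEq V]

/-- A single pebbling move: remove two pebbles from `u` and add one on an adjacent `v`. -/
def PebStep (G : SimpleGraph V) (D D' : V → ℕ) : Prop :=
  ∃ u v, G.Adj u v ∧ 2 ≤ D u ∧
    D' = fun x => if x = u then D u - 2 else if x = v then D v + 1 else D x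

/-- Reachability by a sequence of pebbling moves. -/
def PebReach (G : SimpleGraph V) : (V → ℕ) → (V → ℕ) → Prop :=
  Relation.ReflTransGen (PebStep G)

/-- `D` is `ω`-solvable: some sequence of pebbling moves reaches `D'` with `D' ≥ ω`. -/
def Solvable (G : SimpleGraph V) (ω D : V → ℕ) : Prop :=
  ∃ D', PebReach G D D' ∧ ∀ v, ω v ≤ D' v

/-- The `ω`-cover pebbling number: least `N` such that every distribution of
`N` pebbles is `ω`-solvable. -/
noncomputable def coverNum [Fintype V] (G : SimpleGraph V) (ω : V → ℕ) : ℕ :=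
  sInf {N | ∀ D : V → ℕ, (∑ v, D v) = N → Solvable G ω D}

/-- The `t`-pebbling number of a vertex `v`: least `N` such that from every
distribution of `N` pebbles one can move `t` pebbles onto `v`. -/
noncomputable def ftNum [Fintype V] (G : SimpleGraph V) (v : V) (t : ℕ) : ℕ :=
  sInf {N | ∀ D : V → ℕ, (∑ x, D x) = N → ∃ D', PebReach G D D' ∧ t ≤ D' v}
/-- A valid sequence of pebbling moves: `ValidSeq G D S D'` means executing the
moves of `S` in order (each move `(u,v)` removes two pebbles from `u`, which must
hold at least two, and adds one on the adjacent vertex `v`) transforms `D` into `D'`. -/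
inductive ValidSeq (G : SimpleGraph V) : (V → ℕ) → List (V × V) → (V → ℕ) → Prop
  | nil (D : V → ℕ) : ValidSeq G D [] D
  | cons (D : V → ℕ) (u v : V) (huv : G.Adj u v) (h2 : 2 ≤ D u) {S : List (V × V)}
      {D' : V → ℕ}
      (h : ValidSeq G (fun x => if x = u then D u - 2 else if x = v then D v + 1 else D x)
        S D') :
      ValidSeq G D ((u, v) :: S) D'

/-- A generalized pebbling move among vertices of `A`, on integer-valued distributions. -/
def ZStepOn (G : SimpleGraph V) (A : Set V) (C C' : V → ℤ) : Prop :=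
  ∃ u v, u ∈ A ∧ v ∈ A ∧ G.Adj u v ∧ 2 ≤ C u ∧
    C' = fun x => if x = u then C u - 2 else if x = v then C v + 1 else C x

/-- A generalized distribution is `0`-solvable within `A` if pebbling moves inside `A`
reach a distribution nonnegative on `A`. -/
def ZSolvableOn (G : SimpleGraph V) (A : Set V) (C : V → ℤ) : Prop :=
  ∃ C', Relation.ReflTransGen (ZStepOn G A) C C' ∧ ∀ x ∈ A, 0 ≤ C' x

/-- Iterated leaf contraction: `Contract G s C s' C'` means the generalized
distribution `C` on the vertex set `s` can be contracted to `C'` on `s'` by repeatedly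
deleting a leaf `x` (a vertex with a unique neighbor `y` in the current set), replacing
`C y` by `C y + ⌊C x / 2⌋` if `C x ≥ 0` and by `C y + 2 C x` if `C x < 0`. -/
inductive Contract (G : SimpleGraph V) : Finset V → (V → ℤ) → Finset V → (V → ℤ) → Prop
  | refl (s : Finset V) (C : V → ℤ) : Contract G s C s C
  | step {s : Finset V} {C : V → ℤ} (x y : V) (hx : x ∈ s) (hy : y ∈ s)
      (hadj : G.Adj x y) (hleaf : ∀ z ∈ s, G.Adj x z → z = y)
      {s' : Finset V} {C' : V → ℤ}
      (h : Contract G (s.erase x)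
        (fun w => if w = y then C y + (if 0 ≤ C x then C x / 2 else 2 * C x) else C w)
        s' C') :
      Contract G s C s' C'

variable {G : SimpleGraph V}

lemma contract_subset {s : Finset V} {C : V → ℤ} {s' : Finset V} {C' : V → ℤ}
    (h : Contract G s C s' C') : s' ⊆ s := by
  induction h with
  | refl s C => exact Finset.Subset.refl s
  | step x y hx hy hadj hleaf h ih => exact ih.trans (Finset.erase_subset x _)

lemma contract_isolated {s : Finset V} {C : V → ℤ} {s' : Finset V} {C' : V → ℤ}
    (h : Contract G s C s' C') : ∀ x ∈ s, (∀ z ∈ s, ¬ G.Adj x z) → x ∈ s' := by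
  induction h with
  | refl s C => exact fun x hx _ => hx
  | step x₀ y₀ hx₀ hy₀ hadj₀ hleaf₀ h ih =>
    intro x hx hiso
    have hne : x ≠ x₀ := by rintro rfl; exact hiso y₀ hy₀ hadj₀
    exact ih x (Finset.mem_erase.2 ⟨hne, hx⟩) (fun z hz => hiso z (Finset.mem_of_mem_erase hz))

lemma ite_add_comm (C : V → ℤ) (y₀ y : V) (a b : ℤ) :
    (fun w => if w = y₀ then (if y₀ = y then C y + b else C y₀) + a
      else if w = y then C y + b else C w)
    = (fun w => if w = y then (if y = y₀ then C y₀ + a else C y) + b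
      else if w = y₀ then C y₀ + a else C w) := by
  funext w
  by_cases h0 : y₀ = y
  · subst h0
    by_cases hw : w = y₀ <;> simp [hw] <;> ring
  · have h0' : ¬ y = y₀ := fun h => h0 h.symm
    by_cases hw1 : w = y₀
    · subst hw1
      simp [h0, h0']
    · by_cases hw2 : w = y
      · subst hw2
        simp [h0, h0', hw1]
      · simp [hw1, hw2]

lemma contract_strip {s : Finset V} {C : V → ℤ} {s' : Finset V} {C' : V → ℤ}
    (h : Contract G s C s' C') :
    ∀ x y, x ∈ s → x ∉ s' → y ∈ s → G.Adj x y → (∀ z ∈ s, G.Adj x z → z = y) →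
      Contract G (s.erase x)
        (fun w => if w = y then C y + (if 0 ≤ C x then C x / 2 else 2 * C x) else C w) s' C' := by
  induction h with
  | refl s C => intro x y hx hx' _ _ _; exact absurd hx hx'
  | step x₀ y₀ hx₀ hy₀ hadj₀ hleaf₀ h ih =>
    intro x y hx hxs' hy hadj hleaf
    by_cases hxx : x = x₀
    · subst hxx
      have hyy : y = y₀ := hleaf₀ y hy hadj
      subst hyy
      exact h
    · by_cases hyx : y = x₀
      · subst hyx
        exfalso
        refine hxs' (contract_isolated h x (Finset.mem_erase.2 ⟨hxx, hx⟩) ?_)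
        intro z hz hadjz
        exact (Finset.ne_of_mem_erase hz) (hleaf z (Finset.mem_of_mem_erase hz) hadjz)
      · have hy₀x : y₀ ≠ x := by
          rintro rfl
          exact hyx ((hleaf x₀ hx₀ hadj₀.symm).symm)
        have hxy₀ : x ≠ y₀ := fun h' => hy₀x h'.symm
        have hx₀y : x₀ ≠ y := fun h' => hyx h'.symm
        have hx₀x : x₀ ≠ x := fun h' => hxx h'.symm
        refine Contract.step x₀ y₀ (Finset.mem_erase.2 ⟨hx₀x, hx₀⟩)
          (Finset.mem_erase.2 ⟨hy₀x, hy₀⟩) hadj₀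
          (fun z hz hadjz => hleaf₀ z (Finset.mem_of_mem_erase hz) hadjz) ?_
        have H := ih x y (Finset.mem_erase.2 ⟨hxx, hx⟩) hxs' (Finset.mem_erase.2 ⟨hyx, hy⟩)
          hadj (fun z hz hadjz => hleaf z (Finset.mem_of_mem_erase hz) hadjz)
        rw [Finset.erase_right_comm (a := x) (b := x₀)]
        simp only [if_neg hx₀y]
        simp only [if_neg hxy₀] at H
        rw [ite_add_comm]
        exact H

lemma contract_det {s : Finset V} {C : V → ℤ} {s' : Finset V} {C1 : V → ℤ}
    (h1 : Contract G s C s' C1) :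
    ∀ {C2}, Contract G s C s' C2 → C1 = C2 := by
  induction h1 with
  | refl s C =>
    intro C2 h2
    cases h2 with
    | refl => rfl
    | step x y hx hy hadj hleaf h =>
      exact absurd (contract_subset h hx) (Finset.notMem_erase x _)
  | step x y hx hy hadj hleaf h ih =>
    intro C2 h2
    have hxs' : x ∉ _ := fun hmem => Finset.notMem_erase x _ (contract_subset h hmem)
    exact ih (contract_strip h2 x y hx hxs' hy hadj hleaf)

lemma contract_trans : ∀ {s : Finset V} {C s' C'}, Contract G s C s' C' →
    ∀ {s'' C''}, Contract G s' C' s'' C'' → Contract G s C s'' C'' := by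
  intro s C s' C' h1
  induction h1 with
  | refl s C => intro _ _ h2; exact h2
  | step x y hx hy hadj hleaf h ih =>
    intro s'' C'' h2
    exact Contract.step x y hx hy hadj hleaf (ih h2)

lemma zstep_mono {A A' : Set V} (hAA : A ⊆ A') {C C' : V → ℤ} (h : ZStepOn G A C C') :
    ZStepOn G A' C C' := by
  obtain ⟨u, v, hu, hv, hadj, h2, rfl⟩ := h
  exact ⟨u, v, hAA hu, hAA hv, hadj, h2, rfl⟩

lemma zreach_mono {A A' : Set V} (hAA : A ⊆ A') {C C' : V → ℤ}
    (h : Relation.ReflTransGen (ZStepOn G A) C C') :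
    Relation.ReflTransGen (ZStepOn G A') C C' :=
  by
  induction h with
  | refl => exact Relation.ReflTransGen.refl
  | tail _ hs ih => exact ih.tail (zstep_mono hAA hs)

lemma zreach_const {A : Set V} {C C' : V → ℤ}
    (h : Relation.ReflTransGen (ZStepOn G A) C C') :
    ∀ w ∉ A, C' w = C w := by
  induction h with
  | refl => intros; rfl
  | tail hm step ih =>
    intro w hw
    obtain ⟨u, v, hu, hv, hadj, h2, rfl⟩ := step
    have hwu : w ≠ u := fun h => hw (h ▸ hu)
    have hwv : w ≠ v := fun h => hw (h ▸ hv)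
    simp only [if_neg hwu, if_neg hwv]
    exact ih w hw

lemma zreach_dominate {A : Set V} {C1 C1' : V → ℤ}
    (h : Relation.ReflTransGen (ZStepOn G A) C1 C1') (E : V → ℤ)
    (hle : ∀ w ∈ A, C1 w ≤ E w) :
    Relation.ReflTransGen (ZStepOn G A) E (fun w => E w + (C1' w - C1 w)) := by
  induction h with
  | refl =>
    have he : (fun w => E w + (C1 w - C1 w)) = E := by funext w; ring
    rw [he]
  | @tail Cm Cf hm step ih =>
    obtain ⟨u, v, hu, hv, hadj, h2, rfl⟩ := step
    refine ih.tail ⟨u, v, hu, hv, hadj, ?_, ?_⟩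
    · show 2 ≤ E u + (Cm u - C1 u)
      have := hle u hu; omega
    · funext z
      show E z + ((if z = u then Cm u - 2 else if z = v then Cm v + 1 else Cm z) - C1 z)
        = if z = u then (E u + (Cm u - C1 u)) - 2
          else if z = v then (E v + (Cm v - C1 v)) + 1 else E z + (Cm z - C1 z)
      by_cases hz1 : z = u
      · subst hz1; simp; ring
      · by_cases hz2 : z = v
        · subst hz2; simp [hz1]; ring
        · simp [hz1, hz2]

lemma zreach_moveK {A : Set V} {u v : V} (hu : u ∈ A) (hv : v ∈ A) (hadj : G.Adj u v) :
    ∀ (k : ℕ) (C : V → ℤ), 2 * (k : ℤ) ≤ C u →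
    ∃ C', Relation.ReflTransGen (ZStepOn G A) C C' ∧
      C' u = C u - 2 * k ∧ C' v = C v + k ∧ ∀ w, w ≠ u → w ≠ v → C' w = C w := by
  intro k
  induction k with
  | zero => intro C h; exact ⟨C, Relation.ReflTransGen.refl, by simp, by simp, fun _ _ _ => rfl⟩
  | succ k ih =>
    intro C h
    have huv : u ≠ v := hadj.ne
    have hvu : v ≠ u := fun h' => huv h'.symm
    set C1 : V → ℤ := fun z => if z = u then C u - 2 else if z = v then C v + 1 else C z with hC1
    have hstep : ZStepOn G A C C1 := ⟨u, v, hu, hv, hadj, by push_cast at h; omega, rfl⟩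
    have h1u : C1 u = C u - 2 := by simp [hC1]
    have h1v : C1 v = C v + 1 := by simp [hC1, hvu]
    obtain ⟨C', hr, hu', hv', hw'⟩ := ih C1 (by rw [h1u]; push_cast; push_cast at h; omega)
    refine ⟨C', Relation.ReflTransGen.head hstep hr, ?_, ?_, ?_⟩
    · rw [hu', h1u]; push_cast; ring
    · rw [hv', h1v]; push_cast; ring
    · intro w hwu hwv
      rw [hw' w hwu hwv, hC1]
      simp [hwu, hwv]

lemma contract_solvable {s : Finset V} {C : V → ℤ} {s' : Finset V} {C' : V → ℤ}
    (h : Contract G s C s' C') (hs : ZSolvableOn G ↑s' C') : ZSolvableOn G ↑s C := by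
  induction h with
  | refl => exact hs
  | @step s C x y hx hy hadj hleaf s' C' h ih =>
    obtain ⟨C₀', hreach, hpos⟩ := ih hs
    have hxy : x ≠ y := hadj.ne
    have hyx : y ≠ x := fun h' => hxy h'.symm
    have hye : y ∈ s.erase x := Finset.mem_erase.2 ⟨hyx, hy⟩
    have hxe : x ∉ (↑(s.erase x) : Set V) := by simp
    have hsub : (↑(s.erase x) : Set V) ⊆ ↑s := by
      intro z hz
      rw [Finset.mem_coe] at hz ⊢
      exact Finset.mem_of_mem_erase hz
    have hconst : C₀' x = C x := by
      have h' := zreach_const hreach x hxe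
      simpa [hxy] using h'
    by_cases hsign : 0 ≤ C x
    · -- move ⌊C x / 2⌋ pebbles from x to y first
      set k : ℕ := (C x / 2).toNat with hk
      have hk' : (k : ℤ) = C x / 2 := Int.toNat_of_nonneg (by omega)
      obtain ⟨E, hE, hEx, hEy, hEw⟩ := zreach_moveK (A := (↑s : Set V)) (by simpa using hx)
        (by simpa using hy) hadj k C (by omega)
      have hle : ∀ w ∈ (↑(s.erase x) : Set V), (fun w => if w = y then C y +
          (if 0 ≤ C x then C x / 2 else 2 * C x) else C w) w ≤ E w := by
        intro w hw
        have hwx : w ≠ x := (Finset.mem_erase.1 (Finset.mem_coe.1 hw)).1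
        beta_reduce
        by_cases hwy : w = y
        · rw [if_pos hwy, if_pos hsign, hwy, hEy]; omega
        · rw [if_neg hwy, hEw w hwx hwy]
      have hdom := zreach_dominate hreach E hle
      refine ⟨_, hE.trans (zreach_mono hsub hdom), ?_⟩
      intro z hz
      beta_reduce
      by_cases hzx : z = x
      · rw [hzx, if_neg hxy, hconst, hEx]
        omega
      · have hz' : z ∈ (↑(s.erase x) : Set V) := by
          rw [Finset.mem_coe, Finset.mem_erase]
          exact ⟨hzx, by rwa [Finset.mem_coe] at hz⟩
        have hpz := hpos z hz'
        by_cases hzy : z = y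
        · rw [hzy] at hpz ⊢
          rw [if_pos rfl, if_pos hsign, hEy]
          omega
        · rw [if_neg hzy, hEw z hzx hzy]
          omega
    · -- C x < 0
      have hle : ∀ w ∈ (↑(s.erase x) : Set V), (fun w => if w = y then C y +
          (if 0 ≤ C x then C x / 2 else 2 * C x) else C w) w ≤ C w := by
        intro w _
        beta_reduce
        by_cases hwy : w = y
        · rw [if_pos hwy, if_neg hsign, hwy]; omega
        · rw [if_neg hwy]
      have hdom := zreach_dominate hreach C hle
      set E : V → ℤ := fun w => C w + (C₀' w - (fun w => if w = y then C y +
        (if 0 ≤ C x then C x / 2 else 2 * C x) else C w) w) with hEdef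
      have hEx : E x = C x := by rw [hEdef]; simp only [if_neg hxy]; rw [hconst]; ring
      have hEy : E y = C₀' y - 2 * C x := by
        rw [hEdef]; beta_reduce; rw [if_pos rfl, if_neg hsign]; ring
      have hEw : ∀ w, w ≠ y → E w = C₀' w := by
        intro w hwy
        rw [hEdef]; beta_reduce; rw [if_neg hwy]; ring
      have hky : (0:ℤ) ≤ -C x := by omega
      set k : ℕ := (-C x).toNat with hk
      have hk' : (k : ℤ) = -C x := Int.toNat_of_nonneg hky
      have hCy0 : 0 ≤ C₀' y := hpos y (by rw [Finset.mem_coe]; exact hye)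
      obtain ⟨F, hF, hFy, hFx, hFw⟩ := zreach_moveK (A := (↑s : Set V)) (by simpa using hy)
        (by simpa using hx) hadj.symm k E (by rw [hEy]; omega)
      refine ⟨F, (zreach_mono hsub hdom).trans hF, ?_⟩
      intro z hz
      by_cases hzx : z = x
      · rw [hzx, hFx, hEx]; omega
      · by_cases hzy : z = y
        · rw [hzy, hFy, hEy]; omega
        · rw [hFw z hzy hzx, hEw z hzy]
          refine hpos z ?_
          rw [Finset.mem_coe, Finset.mem_erase]
          exact ⟨hzx, by rwa [Finset.mem_coe] at hz⟩



lemma zreach_to_peb (ω : V → ℕ) {C C' : V → ℤ}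
    (h : Relation.ReflTransGen (ZStepOn G Set.univ) C C') (hpos : ∀ w, 0 ≤ C w + ω w) :
    ∃ D' : V → ℕ, PebReach G (fun w => (C w + ω w).toNat) D' ∧ ∀ w, (D' w : ℤ) = C' w + ω w := by
  induction h with
  | refl =>
    refine ⟨fun w => (C w + ω w).toNat, Relation.ReflTransGen.refl, fun w => ?_⟩
    exact_mod_cast congrArg Int.toNat rfl ▸ (Int.toNat_of_nonneg (hpos w))
  | @tail Cm Cf hm step ih =>
    obtain ⟨Dm, hDm, hDmeq⟩ := ih
    obtain ⟨u, v, _, _, hadj, h2, rfl⟩ := step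
    have huv : u ≠ v := hadj.ne
    have h2u : 2 ≤ Dm u := by have := hDmeq u; have := (ω u).zero_le; omega
    refine ⟨fun w => if w = u then Dm u - 2 else if w = v then Dm v + 1 else Dm w,
      hDm.tail ⟨u, v, hadj, h2u, rfl⟩, ?_⟩
    intro w
    by_cases hwu : w = u
    · rw [hwu]
      simp only [if_pos rfl]
      have := hDmeq u
      push_cast
      omega
    · by_cases hwv : w = v
      · rw [hwv]
        simp only [if_neg (hwv ▸ hwu : v ≠ u), if_pos rfl]
        have := hDmeq v
        push_cast
        omega
      · simp only [if_neg hwu, if_neg hwv]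
        exact hDmeq w

lemma zsolvable_to_solvable (ω D : V → ℕ)
    (h : ZSolvableOn G Set.univ (fun w => (D w : ℤ) - ω w)) : Solvable G ω D := by
  obtain ⟨C', hreach, hpos⟩ := h
  obtain ⟨D', hD', heq⟩ := zreach_to_peb ω hreach (fun w => by simp)
  have hinit : (fun w => (((D w : ℤ) - ω w) + ω w).toNat) = D := by
    funext w; omega
  rw [hinit] at hD'
  refine ⟨D', hD', fun v => ?_⟩
  have h1 := heq v
  have h2 := hpos v (Set.mem_univ v)
  omega

lemma tree_no_triangle {T : SimpleGraph V} (hT : T.IsTree) {a b c : V}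
    (h1 : T.Adj a b) (h2 : T.Adj a c) (hbc : b ≠ c) : ¬ T.Adj b c := by
  intro h3
  have hab : a ≠ b := h1.ne
  have hac : a ≠ c := h2.ne
  have hp1 : (SimpleGraph.Walk.cons h3 SimpleGraph.Walk.nil).IsPath := by
    simp [SimpleGraph.Walk.isPath_def, hbc]
  have hp2 : (SimpleGraph.Walk.cons h1.symm (SimpleGraph.Walk.cons h2
      SimpleGraph.Walk.nil)).IsPath := by
    simp [SimpleGraph.Walk.isPath_def, hbc, hab, hac, Ne.symm hab]
  have := hT.IsAcyclic.path_unique ⟨_, hp1⟩ ⟨_, hp2⟩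
  have hlen := congrArg (fun p => p.1.length) this
  simp at hlen


lemma contract_star {T : SimpleGraph V} (hT : T.IsTree) (c d : V) (hcd : T.Adj c d) :
    ∀ (M : Finset V), (∀ n ∈ M, T.Adj c n ∧ n ≠ d) → ∀ (C : V → ℤ),
      ∃ C2, Contract T ({c, d} ∪ M) C {c, d} C2 ∧ C2 d = C d := by
  intro M
  induction M using Finset.induction_on with
  | empty =>
    intro _ C
    refine ⟨C, ?_, rfl⟩
    rw [Finset.union_empty]
    exact Contract.refl _ C
  | insert a M' ha ih =>
    intro hM C
    have hca : T.Adj c a := (hM a (Finset.mem_insert_self a M')).1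
    have had : a ≠ d := (hM a (Finset.mem_insert_self a M')).2
    have hac : a ≠ c := fun h => (h ▸ hca).ne rfl
    have hdc : d ≠ c := hcd.ne'
    have hset : (({c, d} : Finset V) ∪ insert a M').erase a = {c, d} ∪ M' := by
      rw [Finset.erase_union_distrib, Finset.erase_insert ha,
        Finset.erase_eq_of_notMem (by simp [hac, had])]
    obtain ⟨C2, hcon, hd⟩ := ih (fun n hn => hM n (Finset.mem_insert_of_mem hn))
      (fun w => if w = c then C c + (if 0 ≤ C a then C a / 2 else 2 * C a) else C w)
    refine ⟨C2, ?_, by rw [hd, if_neg hdc]⟩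
    refine Contract.step a c (by simp) (by simp) hca.symm ?_ ?_
    · intro z hz hadjz
      rcases Finset.mem_union.1 hz with hz1 | hz2
      · rcases Finset.mem_insert.1 hz1 with rfl | hz1'
        · rfl
        · rw [Finset.mem_singleton.1 hz1'] at hadjz
          exact absurd hadjz (tree_no_triangle hT hca hcd had)
      · rcases Finset.mem_insert.1 hz2 with rfl | hz2'
        · exact absurd hadjz (T.loopless.irrefl z)
        · have hz3 := hM z (Finset.mem_insert_of_mem hz2')
          exact absurd hadjz (tree_no_triangle hT hca hz3.1
            (fun h => ha (h ▸ hz2')))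
      done
    · rw [hset]
      exact hcon

/-- If `D` is not `ω`-solvable and `x ~ y` with `C_x(y) ≥ 0`, then `C_y(x) < 0`. -/
theorem star_contraction_neg (T : SimpleGraph V) [Fintype V] [DecidableRel T.Adj]
    (hT : T.IsTree) (ω D : V → ℕ) (hns : ¬ Solvable T ω D) (x y : V) (hxy : T.Adj x y)
    (hCx : ∃ Cx : V → ℤ,
      Contract T Finset.univ (fun w => (D w : ℤ) - (ω w : ℤ))
        (insert x (T.neighborFinset x)) Cx ∧ 0 ≤ Cx y) :
    ∀ Cy : V → ℤ,
      Contract T Finset.univ (fun w => (D w : ℤ) - (ω w : ℤ))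
        (insert y (T.neighborFinset y)) Cy → Cy x < 0 := by
  intro Cy hCyD
  by_contra hcy
  push_neg at hcy
  obtain ⟨Cx, hCxD, hCxy⟩ := hCx
  apply hns
  have hyx : T.Adj y x := hxy.symm
  have hy_mem : y ∈ T.neighborFinset x := by simpa using hxy
  have hx_mem : x ∈ T.neighborFinset y := by simpa using hyx
  have hset1 : insert x (T.neighborFinset x)
      = ({x, y} : Finset V) ∪ (T.neighborFinset x).erase y := by
    ext z
    simp only [Finset.mem_insert, Finset.mem_union, Finset.mem_erase, Finset.mem_singleton]
    by_cases hzy : z = y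
    · subst hzy; simp [hy_mem]
    · simp only [hzy, false_or, and_true, iff_self, or_false]
      tauto
  have hset2 : insert y (T.neighborFinset y)
      = ({y, x} : Finset V) ∪ (T.neighborFinset y).erase x := by
    ext z
    simp only [Finset.mem_insert, Finset.mem_union, Finset.mem_erase, Finset.mem_singleton]
    by_cases hzx : z = x
    · subst hzx; simp [hx_mem]
    · simp only [hzx, false_or, and_true, iff_self, or_false]
      tauto
  obtain ⟨C2, hdel, hC2y⟩ := contract_star hT x y hxy ((T.neighborFinset x).erase y)
    (fun n hn => ⟨by simpa using (Finset.mem_erase.1 hn).2, (Finset.mem_erase.1 hn).1⟩) Cx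
  obtain ⟨C2', hdel', hC2'x⟩ := contract_star hT y x hyx ((T.neighborFinset y).erase x)
    (fun n hn => ⟨by simpa using (Finset.mem_erase.1 hn).2, (Finset.mem_erase.1 hn).1⟩) Cy
  rw [hset1] at hCxD
  rw [hset2] at hCyD
  have Da := contract_trans hCxD hdel
  have Db := contract_trans hCyD hdel'
  rw [Finset.pair_comm y x] at Db
  have heq : C2 = C2' := contract_det Da Db
  have hsolve : ZSolvableOn T ↑({x, y} : Finset V) C2 := by
    refine ⟨C2, Relation.ReflTransGen.refl, ?_⟩
    intro z hz
    rw [Finset.mem_coe, Finset.mem_insert, Finset.mem_singleton] at hz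
    rcases hz with rfl | rfl
    · rw [heq, hC2'x]; exact hcy
    · rw [hC2y]; exact hCxy
  have hfinal := contract_solvable Da hsolve
  rw [Finset.coe_univ] at hfinal
  exact zsolvable_to_solvable ω D hfinal
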